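/- For every n-vertex graph G and every ε > 0, there exist vertices v_1,...,v_k ∈ V(G) (not necessarily distinct) and pairwise disjoint sets S_1,...,S_k ⊆ V(G) such that: (1) |S_i| = εn/3 for all i, hence k ≤ 3/ε; (2) v_i is adjacent to every vertex of S_i; and (3) the number of edges of G incident to X := V(G) \ (S_1 ∪ ... ∪ S_k) is at most εn²/2. -/

import Mathlib

open scoped Classical

open Finset

private lemma foldr_union_mem {V : Type*} [DecidableEq V] (L : List (V × Finset V)) (x : V) :
    x ∈ L.foldr (fun p acc => p.2 ∪ acc) ∅ ↔ ∃ p ∈ L, x ∈ p.2 := by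
  induction L with
  | nil => simp
  | cons a t ih => simp [ih]

private lemma greedy {V : Type*} [Fintype V] [DecidableEq V] (G : SimpleGraph V)
    (m : ℕ) (hm : 0 < m) :
    ∀ (N : ℕ) (R : Finset V), R.card ≤ N →
    ∃ L : List (V × Finset V),
      L.Pairwise (fun p q => Disjoint p.2 q.2) ∧
      (∀ p ∈ L, p.2 ⊆ R ∧ p.2.card = m ∧ ∀ x ∈ p.2, G.Adj p.1 x) ∧
      (∀ v : V, ((R \ L.foldr (fun p acc => p.2 ∪ acc) ∅).filter (G.Adj v)).card < m) ∧
      L.length * m ≤ R.card := by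
  intro N
  induction N with
  | zero =>
      intro R hR
      refine ⟨[], by simp, by simp, ?_, by simp⟩
      intro v
      calc ((R \ ∅).filter (G.Adj v)).card ≤ R.card := by
              simpa using card_filter_le R _
        _ < m := by omega
  | succ N ih =>
      intro R hR
      by_cases h : ∃ v, m ≤ (R.filter (G.Adj v)).card
      · obtain ⟨v, hv⟩ := h
        obtain ⟨S, hSsub, hScard⟩ := Finset.exists_subset_card_eq hv
        have hSR : S ⊆ R := hSsub.trans (filter_subset _ _)
        have hmR : m ≤ R.card := hScard ▸ card_le_card hSR
        have hcard : (R \ S).card ≤ N := by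
          rw [card_sdiff_of_subset hSR, hScard]; omega
        obtain ⟨L', hpw, hprop, hfil, hlen⟩ := ih (R \ S) hcard
        refine ⟨(v, S) :: L', ?_, ?_, ?_, ?_⟩
        · refine List.Pairwise.cons ?_ hpw
          intro q hq
          exact (Finset.disjoint_sdiff).mono_right ((hprop q hq).1)
        · rintro p hp
          rcases List.mem_cons.mp hp with rfl | hp
          · exact ⟨hSR, hScard, fun x hx => (mem_filter.mp (hSsub hx)).2⟩
          · obtain ⟨h1, h2, h3⟩ := hprop p hp
            exact ⟨h1.trans (sdiff_subset), h2, h3⟩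
        · intro w
          have : R \ ((v, S) :: L').foldr (fun p acc => p.2 ∪ acc) ∅
              = (R \ S) \ L'.foldr (fun p acc => p.2 ∪ acc) ∅ := by
            simp [sdiff_sdiff]
          rw [this]
          exact hfil w
        · have := hlen
          rw [card_sdiff_of_subset hSR, hScard] at this
          simp only [List.length_cons, Nat.succ_mul]
          omega
      · push_neg at h
        refine ⟨[], by simp, by simp, ?_, by simp⟩
        intro v
        simpa using h v

theorem stmt_7 {V : Type*} [Fintype V] [DecidableEq V] (G : SimpleGraph V)
    (ε : ℝ) (hε : 0 < ε) (m : ℕ) (hm : (m : ℝ) = ε * Fintype.card V / 3) :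
    ∃ (k : ℕ) (v : Fin k → V) (S : Fin k → Finset V),
      (k : ℝ) ≤ 3 / ε ∧
      (∀ i j : Fin k, i ≠ j → Disjoint (S i) (S j)) ∧
      (∀ i : Fin k, (S i).card = m) ∧
      (∀ i : Fin k, ∀ x ∈ S i, G.Adj (v i) x) ∧
      (Set.ncard {e : Sym2 V | e ∈ G.edgeSet ∧ ∃ x ∈ e, ∀ i : Fin k, x ∉ S i} : ℝ)
        ≤ ε * (Fintype.card V : ℝ) ^ 2 / 2 := by
  set n := Fintype.card V with hn
  by_cases hn0 : n = 0
  · -- V is empty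
    have hV : IsEmpty V := Fintype.card_eq_zero_iff.mp hn0
    refine ⟨0, Fin.elim0, Fin.elim0, by norm_num; positivity, fun i => i.elim0, fun i => i.elim0,
      fun i => i.elim0, ?_⟩
    have : {e : Sym2 V | e ∈ G.edgeSet ∧ ∃ x ∈ e, ∀ i : Fin 0, x ∉ (Fin.elim0 : Fin 0 → Finset V) i} = ∅ := by
      ext e
      induction e using Sym2.ind with
      | _ a b => exact (hV.false a).elim
    rw [this, Set.ncard_empty]
    norm_num
    positivity
  · have hnpos : 0 < n := Nat.pos_of_ne_zero hn0
    have hmpos : 0 < m := by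
      have : (0:ℝ) < (m:ℝ) := by
        rw [hm]; positivity
      exact_mod_cast this
    obtain ⟨L, hpw, hprop, hfil, hlen⟩ := greedy G m hmpos (Finset.univ : Finset V).card
      Finset.univ le_rfl
    set U := L.foldr (fun p acc => p.2 ∪ acc) ∅ with hU
    refine ⟨L.length, fun i => (L.get i).1, fun i => (L.get i).2, ?_, ?_, ?_, ?_, ?_⟩
    · -- k ≤ 3/ε
      have hcard : (Finset.univ : Finset V).card = n := Finset.card_univ
      rw [hcard] at hlen
      have h1 : (L.length : ℝ) * (m : ℝ) ≤ n := by exact_mod_cast hlen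
      rw [hm] at h1
      have hn' : (0:ℝ) < (n:ℝ) := Nat.cast_pos.mpr hnpos
      rw [le_div_iff₀ hε]
      nlinarith [h1, hn']
    · intro i j hij
      rw [List.pairwise_iff_get] at hpw
      rcases lt_or_gt_of_ne hij with h | h
      · exact hpw i j h
      · exact (hpw j i h).symm
    · intro i
      exact (hprop _ (L.get_mem _)).2.1
    · intro i
      exact (hprop _ (L.get_mem _)).2.2
    · -- edge count
      have hXmem : ∀ x : V, (∀ i : Fin L.length, x ∉ (L.get i).2) ↔ x ∈ Finset.univ \ U := by
        intro x
        simp only [Finset.mem_sdiff, Finset.mem_univ, true_and, hU, foldr_union_mem]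
        constructor
        · rintro h ⟨p, hp, hx⟩
          obtain ⟨i, hi⟩ := List.mem_iff_get.mp hp
          exact h i (hi ▸ hx)
        · intro h i hx
          exact h ⟨L.get i, L.get_mem _, hx⟩
      set X := (Finset.univ : Finset V) \ U with hX
      have hset : {e : Sym2 V | e ∈ G.edgeSet ∧ ∃ x ∈ e, ∀ i : Fin L.length, x ∉ (L.get i).2}
          = ↑(G.edgeFinset.filter (fun e => ∃ x ∈ e, x ∈ X)) := by
        ext e
        simp only [Set.mem_setOf_eq, Finset.coe_filter, SimpleGraph.mem_edgeFinset,
          Set.mem_setOf_eq]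
        constructor
        · rintro ⟨he, x, hxe, hx⟩
          exact ⟨he, x, hxe, (hXmem x).mp hx⟩
        · rintro ⟨he, x, hxe, hx⟩
          exact ⟨he, x, hxe, (hXmem x).mpr hx⟩
      rw [hset, Set.ncard_coe_finset]
      have hsub : G.edgeFinset.filter (fun e => ∃ x ∈ e, x ∈ X) ⊆
          Finset.univ.biUnion (fun v : V => ((X.filter (G.Adj v)).image (fun x => s(v, x)))) := by
        intro e he
        rw [Finset.mem_filter, SimpleGraph.mem_edgeFinset] at he
        obtain ⟨he, x, hxe, hx⟩ := he
        induction e using Sym2.ind with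
        | _ a b =>
          rw [SimpleGraph.mem_edgeSet] at he
          rcases Sym2.mem_iff.mp hxe with rfl | rfl
          · refine Finset.mem_biUnion.mpr ⟨b, Finset.mem_univ _, ?_⟩
            refine Finset.mem_image.mpr ⟨x, Finset.mem_filter.mpr ⟨hx, he.symm⟩, ?_⟩
            exact Sym2.eq_swap
          · refine Finset.mem_biUnion.mpr ⟨a, Finset.mem_univ _, ?_⟩
            exact Finset.mem_image.mpr ⟨x, Finset.mem_filter.mpr ⟨hx, he⟩, rfl⟩
      have hbound : (G.edgeFinset.filter (fun e => ∃ x ∈ e, x ∈ X)).card ≤ n * m := by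
        calc (G.edgeFinset.filter (fun e => ∃ x ∈ e, x ∈ X)).card
            ≤ (Finset.univ.biUnion (fun v : V =>
                ((X.filter (G.Adj v)).image (fun x => s(v, x))))).card :=
              Finset.card_le_card hsub
          _ ≤ ∑ v : V, ((X.filter (G.Adj v)).image (fun x => s(v, x))).card :=
              Finset.card_biUnion_le
          _ ≤ ∑ v : V, m := by
              refine Finset.sum_le_sum fun v _ => ?_
              calc ((X.filter (G.Adj v)).image (fun x => s(v, x))).card
                  ≤ (X.filter (G.Adj v)).card := Finset.card_image_le
                _ ≤ m := (hfil v).le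
          _ = n * m := by simp [hn, mul_comm]
      have h1 : ((G.edgeFinset.filter (fun e => ∃ x ∈ e, x ∈ X)).card : ℝ) ≤ (n : ℝ) * m := by
        exact_mod_cast hbound
      refine h1.trans ?_
      rw [hm]
      have hn' : (0:ℝ) ≤ (n:ℝ) := Nat.cast_nonneg n
      nlinarith
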